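/- If d is irrational with 0 < d < 1, then there exists a two-colouring of the circle of unit perimeter (i.e., of ℝ/ℤ) such that no two points of the same colour are at arc-distance exactly d. -/

import Mathlib

noncomputable section

/-- The subgroup ℤd + ℤ of ℝ. -/
def GG (d : ℝ) : AddSubgroup ℝ where
  carrier := {g | ∃ n m : ℤ, g = n * d + m}
  zero_mem' := ⟨0, 0, by simp⟩
  add_mem' := by
    rintro a b ⟨n, m, rfl⟩ ⟨n', m', rfl⟩
    exact ⟨n + n', m + m', by push_cast; ring⟩
  neg_mem' := by
    rintro a ⟨n, m, rfl⟩
    exact ⟨-n, -m, by push_cast; ring⟩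

lemma keyUnique (d : ℝ) (hirr : Irrational d) {n m n' m' : ℤ}
    (h : (n : ℝ) * d + m = (n' : ℝ) * d + m') : n = n' := by
  by_contra hne
  apply hirr
  refine ⟨(m' - m) / (n - n'), ?_⟩
  have hnn : (n : ℝ) - n' ≠ 0 := by
    have : (n : ℝ) ≠ n' := by exact_mod_cast hne
    exact sub_ne_zero.mpr this
  push_cast
  field_simp
  linarith

def repp (d : ℝ) (x : ℝ) : ℝ := Quotient.out (QuotientAddGroup.mk (s := GG d) x)

lemma sub_repp_mem (d : ℝ) (x : ℝ) : x - repp d x ∈ GG d := by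
  have h : (QuotientAddGroup.mk (s := GG d) (repp d x)) = QuotientAddGroup.mk x :=
    QuotientAddGroup.out_eq' _
  rw [QuotientAddGroup.eq, neg_add_eq_sub] at h
  exact h

lemma repp_eq (d : ℝ) {x y : ℝ} (h : x - y ∈ GG d) : repp d x = repp d y := by
  have : (QuotientAddGroup.mk (s := GG d) x) = QuotientAddGroup.mk y := by
    rw [QuotientAddGroup.eq, neg_add_eq_sub]
    simpa [neg_sub] using (GG d).neg_mem h
  exact congrArg Quotient.out this

def nOf (d : ℝ) (x : ℝ) : ℤ := (sub_repp_mem d x).choose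

lemma nOf_spec (d : ℝ) (x : ℝ) : ∃ m : ℤ, x - repp d x = nOf d x * d + m :=
  (sub_repp_mem d x).choose_spec

lemma nOf_add (d : ℝ) (hirr : Irrational d) {x y : ℝ} {e m : ℤ}
    (h : x - y = e * d + m) : nOf d x = nOf d y + e := by
  have hxy : x - y ∈ GG d := ⟨e, m, h⟩
  have hrep : repp d x = repp d y := repp_eq d hxy
  obtain ⟨mx, hx⟩ := nOf_spec d x
  obtain ⟨my, hy⟩ := nOf_spec d y
  rw [hrep] at hx
  have hkey : (nOf d x : ℝ) * d + mx = ((nOf d y + e : ℤ) : ℝ) * d + ((my + m : ℤ) : ℝ) := by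
    push_cast
    linarith
  exact keyUnique d hirr hkey

end

/-- The circle of unit perimeter is modelled by ℝ with 1-periodic colourings;
the arc-distance between `x` and `y` is `min (Int.fract (x-y)) (1 - Int.fract (x-y))`. -/
theorem stmt_0 (d : ℝ) (hirr : Irrational d) (h0 : 0 < d) (h1 : d < 1) :
    ∃ c : ℝ → Bool, (∀ x, c (x + 1) = c x) ∧
      ∀ x y : ℝ, min (Int.fract (x - y)) (1 - Int.fract (x - y)) = d → c x ≠ c y := by
  refine ⟨fun x => decide (nOf d x % 2 = 0), ?_, ?_⟩
  · intro x
    have h : (x + 1) - x = ((0 : ℤ) : ℝ) * d + ((1 : ℤ) : ℝ) := by push_cast; ring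
    have := nOf_add d hirr h
    simp [this]
  · intro x y hmin
    have hdiff : ∃ e : ℤ, (e = 1 ∨ e = -1) ∧ ∃ m : ℤ, x - y = e * d + m := by
      rcases min_eq_iff.mp hmin with ⟨hf, _⟩ | ⟨hf, _⟩
      · refine ⟨1, Or.inl rfl, ⌊x - y⌋, ?_⟩
        have : x - y - ↑⌊x - y⌋ = d := hf
        push_cast
        linarith
      · refine ⟨-1, Or.inr rfl, ⌊x - y⌋ + 1, ?_⟩
        have : 1 - (x - y - ↑⌊x - y⌋) = d := hf
        push_cast
        linarith
    obtain ⟨e, he, m, hm⟩ := hdiff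
    have hn : nOf d x = nOf d y + e := nOf_add d hirr hm
    rw [ne_eq, decide_eq_decide]
    rcases he with rfl | rfl <;> omega
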